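/- Let g be a finite-dimensional real Lie algebra, m ≥ 1 an integer, and K : g^m → ℝ a symmetric invariant m-multilinear form. Then the full antisymmetrization of K applied to m brackets vanishes: for all x_1, …, x_{2m} ∈ g, ∑_{σ ∈ S_{2m}} sgn(σ) K(⁅x_{σ(1)}, x_{σ(2)}⁆, ⁅x_{σ(3)}, x_{σ(4)}⁆, …, ⁅x_{σ(2m−1)}, x_{σ(2m)}⁆) = 0 (i.e. the form Π_(0) vanishes identically as a consequence of the g-invariance of K). -/

import Mathlib

open Finset

private def evIdx {m : ℕ} (i : Fin m) : Fin (2*m) := ⟨2*(i:ℕ), by omega⟩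
private def odIdx {m : ℕ} (i : Fin m) : Fin (2*m) := ⟨2*(i:ℕ)+1, by omega⟩

section Aux

variable {g : Type*} [LieRing g] [LieAlgebra ℝ g] {m : ℕ}

private def vVec (x : Fin (2*m) → g) (σ : Equiv.Perm (Fin (2*m))) : Fin m → g :=
  fun i => ⁅x (σ (evIdx i)), x (σ (odIdx i))⁆

private def wVec [NeZero m] (x : Fin (2*m) → g) (σ : Equiv.Perm (Fin (2*m))) : Fin m → g :=
  Function.update (vVec x σ) 0 (x (σ (odIdx 0)))

private lemma sum_reindex [NeZero m] (K : MultilinearMap ℝ (fun _ : Fin m => g) ℝ)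
    (x : Fin (2*m) → g) (s : Fin m) (hs : s ≠ 0)
    (π : Equiv.Perm (Fin (2*m)))
    (hπ : ∀ z : Fin (2*m), z ≠ evIdx (0:Fin m) → z ≠ evIdx s → z ≠ odIdx s → π z = z)
    (p q r : Fin (2*m)) :
    ∑ σ : Equiv.Perm (Fin (2*m)), ((Equiv.Perm.sign σ : ℤ) : ℝ) *
        K (Function.update (wVec x σ) s ⁅x (σ (π p)), ⁅x (σ (π q)), x (σ (π r))⁆⁆)
      = ((Equiv.Perm.sign π : ℤ) : ℝ) *
        ∑ σ : Equiv.Perm (Fin (2*m)), ((Equiv.Perm.sign σ : ℤ) : ℝ) *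
          K (Function.update (wVec x σ) s ⁅x (σ p), ⁅x (σ q), x (σ r)⁆⁆) := by
  have hs' : (s : ℕ) ≠ 0 := by
    intro h; exact hs (Fin.ext (by simpa using h))
  rw [Finset.mul_sum]
  rw [← Equiv.sum_comp (Equiv.mulRight π)
      (fun σ : Equiv.Perm (Fin (2*m)) => ((Equiv.Perm.sign π : ℤ):ℝ) *
        (((Equiv.Perm.sign σ : ℤ):ℝ) *
        K (Function.update (wVec x σ) s ⁅x (σ p), ⁅x (σ q), x (σ r)⁆⁆)))]
  refine Finset.sum_congr rfl fun σ _ => ?_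
  simp only [Equiv.coe_mulRight]
  have hsgn : ((Equiv.Perm.sign π : ℤ):ℝ) * ((Equiv.Perm.sign (σ * π) : ℤ):ℝ)
      = ((Equiv.Perm.sign σ : ℤ):ℝ) := by
    rw [Equiv.Perm.sign_mul]
    rcases Int.units_eq_one_or (Equiv.Perm.sign π) with h | h <;>
      rcases Int.units_eq_one_or (Equiv.Perm.sign σ) with h' | h' <;>
      simp [h, h'] <;> norm_num
  have happ : ∀ z : Fin (2*m), (σ * π) z = σ (π z) := fun z => rfl
  have hupd : Function.update (wVec x (σ * π)) s
        ⁅x ((σ * π) p), ⁅x ((σ * π) q), x ((σ * π) r)⁆⁆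
      = Function.update (wVec x σ) s ⁅x (σ (π p)), ⁅x (σ (π q)), x (σ (π r))⁆⁆ := by
    funext i
    rcases eq_or_ne i s with rfl | his
    · rw [Function.update_self, Function.update_self]
      simp only [happ]
    · rw [Function.update_of_ne his, Function.update_of_ne his]
      unfold wVec
      rcases eq_or_ne i 0 with rfl | hi0
      · rw [Function.update_self, Function.update_self]
        have h1 : π (odIdx (0:Fin m)) = odIdx (0:Fin m) := by
          apply hπ <;> · simp only [evIdx, odIdx, ne_eq, Fin.mk.injEq]; omega
        rw [happ, h1]
      · have hi0' : (i : ℕ) ≠ 0 := by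
          intro h; exact hi0 (Fin.ext (by simpa using h))
        have his' : (i : ℕ) ≠ (s : ℕ) := fun h => his (Fin.ext h)
        rw [Function.update_of_ne hi0, Function.update_of_ne hi0]
        unfold vVec
        have h1 : π (evIdx i) = evIdx i := by
          apply hπ <;> · simp only [evIdx, odIdx, ne_eq, Fin.mk.injEq]; omega
        have h2 : π (odIdx i) = odIdx i := by
          apply hπ <;> · simp only [evIdx, odIdx, ne_eq, Fin.mk.injEq]; omega
        rw [happ, happ, h1, h2]
  rw [hupd, ← mul_assoc, hsgn]

private lemma As_zero [NeZero m] (K : MultilinearMap ℝ (fun _ : Fin m => g) ℝ)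
    (x : Fin (2*m) → g) (s : Fin m) (hs : s ≠ 0) :
    ∑ σ : Equiv.Perm (Fin (2*m)), ((Equiv.Perm.sign σ : ℤ) : ℝ) *
      K (Function.update (wVec x σ) s
        ⁅x (σ (evIdx (0:Fin m))), ⁅x (σ (evIdx s)), x (σ (odIdx s))⁆⁆) = 0 := by
  have hs' : (s : ℕ) ≠ 0 := by
    intro h; exact hs (Fin.ext (by simpa using h))
  set p0 : Fin (2*m) := evIdx (0:Fin m) with hp0
  set ps : Fin (2*m) := evIdx s with hps
  set qs : Fin (2*m) := odIdx s with hqs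
  have hp0ps : p0 ≠ ps := by
    simp only [hp0, hps, evIdx, ne_eq, Fin.mk.injEq]; omega
  have hp0qs : p0 ≠ qs := by
    simp only [hp0, hqs, evIdx, odIdx, ne_eq, Fin.mk.injEq]; omega
  have hpsqs : ps ≠ qs := by
    simp only [hps, hqs, evIdx, odIdx, ne_eq, Fin.mk.injEq]; omega
  set A := ∑ σ : Equiv.Perm (Fin (2*m)), ((Equiv.Perm.sign σ : ℤ) : ℝ) *
      K (Function.update (wVec x σ) s ⁅x (σ p0), ⁅x (σ ps), x (σ qs)⁆⁆) with hA
  -- Jacobi identity step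
  have hJac : A = (∑ σ : Equiv.Perm (Fin (2*m)), ((Equiv.Perm.sign σ : ℤ) : ℝ) *
        (- K (Function.update (wVec x σ) s ⁅x (σ qs), ⁅x (σ p0), x (σ ps)⁆⁆)
         + K (Function.update (wVec x σ) s ⁅x (σ ps), ⁅x (σ p0), x (σ qs)⁆⁆))) := by
    refine Finset.sum_congr rfl fun σ _ => ?_
    congr 1
    have hbr : ⁅x (σ p0), ⁅x (σ ps), x (σ qs)⁆⁆
        = -⁅x (σ qs), ⁅x (σ p0), x (σ ps)⁆⁆ + ⁅x (σ ps), ⁅x (σ p0), x (σ qs)⁆⁆ := by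
      rw [leibniz_lie]
      congr 1
      rw [← lie_skew]
    rw [hbr, K.map_update_add, K.map_update_neg]
  -- first summand: 3-cycle, sign +1
  have hcyc : ∀ σ : Equiv.Perm (Fin (2*m)),
      ((Equiv.Perm.sign σ : ℤ) : ℝ) *
        (- K (Function.update (wVec x σ) s ⁅x (σ qs), ⁅x (σ p0), x (σ ps)⁆⁆)
         + K (Function.update (wVec x σ) s ⁅x (σ ps), ⁅x (σ p0), x (σ qs)⁆⁆))
      = - (((Equiv.Perm.sign σ : ℤ) : ℝ) *
            K (Function.update (wVec x σ) s ⁅x (σ qs), ⁅x (σ p0), x (σ ps)⁆⁆))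
        + ((Equiv.Perm.sign σ : ℤ) : ℝ) *
            K (Function.update (wVec x σ) s ⁅x (σ ps), ⁅x (σ p0), x (σ qs)⁆⁆) := by
    intro σ; ring
  rw [funext hcyc] at hJac
  rw [Finset.sum_add_distrib, Finset.sum_neg_distrib] at hJac
  -- T1 via 3-cycle π₂ with π₂ p0 = qs, π₂ ps = p0, π₂ qs = ps
  set π₂ : Equiv.Perm (Fin (2*m)) := Equiv.swap ps qs * Equiv.swap p0 ps with hπ₂
  have hπ₂p0 : π₂ p0 = qs := by
    rw [hπ₂, Equiv.Perm.mul_apply, Equiv.swap_apply_left, Equiv.swap_apply_left]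
  have hπ₂ps : π₂ ps = p0 := by
    rw [hπ₂, Equiv.Perm.mul_apply, Equiv.swap_apply_right,
      Equiv.swap_apply_of_ne_of_ne hp0ps hp0qs]
  have hπ₂qs : π₂ qs = ps := by
    rw [hπ₂, Equiv.Perm.mul_apply,
      Equiv.swap_apply_of_ne_of_ne hp0qs.symm hpsqs.symm, Equiv.swap_apply_right]
  have hπ₂fix : ∀ z : Fin (2*m), z ≠ p0 → z ≠ ps → z ≠ qs → π₂ z = z := by
    intro z h1 h2 h3
    simp [hπ₂, Equiv.Perm.mul_apply, Equiv.swap_apply_of_ne_of_ne, h1, h2, h3]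
  have hπ₂sgn : ((Equiv.Perm.sign π₂ : ℤ) : ℝ) = 1 := by
    rw [hπ₂, Equiv.Perm.sign_mul, Equiv.Perm.sign_swap hpsqs, Equiv.Perm.sign_swap hp0ps]
    norm_num
  have hT1 : ∑ σ : Equiv.Perm (Fin (2*m)), ((Equiv.Perm.sign σ : ℤ) : ℝ) *
        K (Function.update (wVec x σ) s ⁅x (σ qs), ⁅x (σ p0), x (σ ps)⁆⁆) = A := by
    have := sum_reindex K x s hs π₂ hπ₂fix p0 ps qs
    rw [hπ₂p0, hπ₂ps, hπ₂qs, hπ₂sgn, one_mul] at this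
    rw [this, hA]
  -- T2 via swap π₁ with π₁ p0 = ps, π₁ ps = p0, π₁ qs = qs
  set π₁ : Equiv.Perm (Fin (2*m)) := Equiv.swap p0 ps with hπ₁
  have hπ₁fix : ∀ z : Fin (2*m), z ≠ p0 → z ≠ ps → z ≠ qs → π₁ z = z := by
    intro z h1 h2 _
    simp [hπ₁, Equiv.swap_apply_of_ne_of_ne, h1, h2]
  have hπ₁sgn : ((Equiv.Perm.sign π₁ : ℤ) : ℝ) = -1 := by
    rw [hπ₁, Equiv.Perm.sign_swap hp0ps]; norm_num
  have hT2 : ∑ σ : Equiv.Perm (Fin (2*m)), ((Equiv.Perm.sign σ : ℤ) : ℝ) *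
        K (Function.update (wVec x σ) s ⁅x (σ ps), ⁅x (σ p0), x (σ qs)⁆⁆) = -A := by
    have := sum_reindex K x s hs π₁ hπ₁fix p0 ps qs
    rw [show π₁ p0 = ps from Equiv.swap_apply_left p0 ps,
        show π₁ ps = p0 from Equiv.swap_apply_right p0 ps,
        show π₁ qs = qs from Equiv.swap_apply_of_ne_of_ne hp0qs.symm hpsqs.symm,
        hπ₁sgn] at this
    rw [this, hA]; ring
  rw [hT1, hT2] at hJac
  linarith [hJac]

end Aux

/-- Let `g` be a finite-dimensional real Lie algebra, `m ≥ 1`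
and `K : g^m → ℝ` a symmetric invariant multilinear form.  Then the full
antisymmetrization of `K` applied to `m` brackets vanishes:
`∑_{σ ∈ S_{2m}} sgn(σ) K(⁅x_{σ(1)},x_{σ(2)}⁆, …, ⁅x_{σ(2m−1)},x_{σ(2m)}⁆) = 0`
for all `x₁,…,x_{2m} ∈ g`. -/
theorem antisymmetrized_brackets_vanish
    {g : Type*} [LieRing g] [LieAlgebra ℝ g] [FiniteDimensional ℝ g]
    (m : ℕ) (hm : 1 ≤ m)
    (K : MultilinearMap ℝ (fun _ : Fin m => g) ℝ)
    (hKsymm : ∀ (v : Fin m → g) (σ : Equiv.Perm (Fin m)), K (v ∘ σ) = K v)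
    (hKinv : ∀ (y : g) (v : Fin m → g),
      ∑ s, K (Function.update v s ⁅y, v s⁆) = 0)
    (x : Fin (2*m) → g) :
    ∑ σ : Equiv.Perm (Fin (2*m)),
      ((Equiv.Perm.sign σ : ℤ) : ℝ) *
        K (fun i : Fin m =>
          ⁅x (σ ⟨2*(i : ℕ), by have := i.isLt; omega⟩),
           x (σ ⟨2*(i : ℕ)+1, by have := i.isLt; omega⟩)⁆) = 0 := by
  have : NeZero m := ⟨by omega⟩
  show ∑ σ : Equiv.Perm (Fin (2*m)), ((Equiv.Perm.sign σ : ℤ) : ℝ) * K (vVec x σ) = 0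
  -- Step 1: invariance rewrites each term
  have step1 : ∀ σ : Equiv.Perm (Fin (2*m)),
      K (vVec x σ) = - ∑ s ∈ Finset.univ.erase (0 : Fin m),
        K (Function.update (wVec x σ) s
          ⁅x (σ (evIdx (0:Fin m))), ⁅x (σ (evIdx s)), x (σ (odIdx s))⁆⁆) := by
    intro σ
    have hinv := hKinv (x (σ (evIdx (0:Fin m)))) (wVec x σ)
    rw [← Finset.sum_erase_add _ _ (Finset.mem_univ (0 : Fin m))] at hinv
    have h0 : K (Function.update (wVec x σ) 0
        ⁅x (σ (evIdx (0:Fin m))), wVec x σ 0⁆) = K (vVec x σ) := by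
      have hw0 : wVec x σ 0 = x (σ (odIdx 0)) := Function.update_self _ _ _
      rw [hw0]
      have : Function.update (wVec x σ) 0 ⁅x (σ (evIdx (0:Fin m))), x (σ (odIdx 0))⁆
          = vVec x σ := by
        unfold wVec
        rw [Function.update_idem]
        have : ⁅x (σ (evIdx (0:Fin m))), x (σ (odIdx (0:Fin m)))⁆ = vVec x σ 0 := rfl
        rw [this, Function.update_eq_self]
      rw [this]
    have hterm : ∀ s ∈ Finset.univ.erase (0 : Fin m),
        K (Function.update (wVec x σ) s ⁅x (σ (evIdx (0:Fin m))), wVec x σ s⁆)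
        = K (Function.update (wVec x σ) s
          ⁅x (σ (evIdx (0:Fin m))), ⁅x (σ (evIdx s)), x (σ (odIdx s))⁆⁆) := by
      intro s hsmem
      have hs : s ≠ 0 := Finset.ne_of_mem_erase hsmem
      have : wVec x σ s = ⁅x (σ (evIdx s)), x (σ (odIdx s))⁆ := by
        unfold wVec
        rw [Function.update_of_ne hs]
        rfl
      rw [this]
    rw [Finset.sum_congr rfl hterm, h0] at hinv
    linarith [hinv]
  calc ∑ σ : Equiv.Perm (Fin (2*m)), ((Equiv.Perm.sign σ : ℤ) : ℝ) * K (vVec x σ)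
      = ∑ σ : Equiv.Perm (Fin (2*m)), ∑ s ∈ Finset.univ.erase (0 : Fin m),
          -(((Equiv.Perm.sign σ : ℤ) : ℝ) *
            K (Function.update (wVec x σ) s
              ⁅x (σ (evIdx (0:Fin m))), ⁅x (σ (evIdx s)), x (σ (odIdx s))⁆⁆)) := by
        refine Finset.sum_congr rfl fun σ _ => ?_
        rw [step1 σ, mul_neg, Finset.mul_sum]
        rw [← Finset.sum_neg_distrib]
    _ = ∑ s ∈ Finset.univ.erase (0 : Fin m), -(∑ σ : Equiv.Perm (Fin (2*m)),
          ((Equiv.Perm.sign σ : ℤ) : ℝ) *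
            K (Function.update (wVec x σ) s
              ⁅x (σ (evIdx (0:Fin m))), ⁅x (σ (evIdx s)), x (σ (odIdx s))⁆⁆)) := by
        rw [Finset.sum_comm]
        refine Finset.sum_congr rfl fun s _ => ?_
        rw [Finset.sum_neg_distrib]
    _ = 0 := by
        refine Finset.sum_eq_zero fun s hsmem => ?_
        rw [As_zero K x s (Finset.ne_of_mem_erase hsmem), neg_zero]
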